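/- Let K be a positive integer and let α be a real skew-symmetric K×K matrix. Then there exists a constant C > 0 (depending on α) such that for every twice continuously differentiable 2π-periodic map u: ℝ → ℝ^K one has ∫₀^{2π} ‖u'(θ) + α·u(θ)‖² dθ ≤ C ∫₀^{2π} ‖u''(θ) + 2α·u'(θ) + α²·u(θ)‖² dθ. -/

import Mathlib

open Real MeasureTheory
open scoped Matrix RealInnerProductSpace

/-- The action of a `K × K` real matrix on `ℝ^K` (with the Euclidean norm). -/
noncomputable def matAct {K : ℕ} (α : Matrix (Fin K) (Fin K) ℝ)
    (x : EuclideanSpace ℝ (Fin K)) : EuclideanSpace ℝ (Fin K) :=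
  Matrix.toEuclideanLin α x

/-- Cauchy–Schwarz for interval integrals of nonnegative continuous functions,
proved by an elementary AM–GM argument. -/
lemma poincare_cs_aux {b : ℝ} (hb : 0 ≤ b) {f : ℝ → ℝ} (hf : Continuous f)
    (hf0 : ∀ x, 0 ≤ f x) :
    (∫ x in (0:ℝ)..b, f x) ^ 2 ≤ b * ∫ x in (0:ℝ)..b, f x ^ 2 := by
  rcases eq_or_lt_of_le hb with h | hbpos
  · simp [← h]
  set A := ∫ x in (0:ℝ)..b, f x ^ 2 with hA
  set I := ∫ x in (0:ℝ)..b, f x with hI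
  have hA0 : 0 ≤ A := intervalIntegral.integral_nonneg hb fun x _ => sq_nonneg _
  have hI0 : 0 ≤ I := intervalIntegral.integral_nonneg hb fun x _ => hf0 x
  have key : ∀ t : ℝ, 0 < t → I ≤ A / (2 * t) + b * t / 2 := by
    intro t ht
    have h1 : I ≤ ∫ x in (0:ℝ)..b, (f x ^ 2 / (2 * t) + t / 2) := by
      refine intervalIntegral.integral_mono_on hb (hf.intervalIntegrable _ _)
        ((((hf.pow 2).div_const _).add continuous_const).intervalIntegrable _ _) fun x _ => ?_
      have h2t : (0:ℝ) < 2 * t := by linarith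
      have heq : f x ^ 2 / (2 * t) + t / 2 = (f x ^ 2 + t ^ 2) / (2 * t) := by
        field_simp
      rw [heq, le_div_iff₀ h2t]
      nlinarith [sq_nonneg (f x - t)]
    have h2 : ∫ x in (0:ℝ)..b, (f x ^ 2 / (2 * t) + t / 2)
        = A / (2 * t) + b * t / 2 := by
      rw [intervalIntegral.integral_add (f := fun x => f x ^ 2 / (2 * t)) (g := fun _ => t / 2)
        (((hf.pow 2).div_const _).intervalIntegrable _ _)
        (intervalIntegrable_const), intervalIntegral.integral_div,
        intervalIntegral.integral_const]
      simp
      ring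
    linarith [h1, h2.le, h2.ge]
  rcases eq_or_lt_of_le hA0 with hA0' | hApos
  · have hIle : I ≤ 0 := by
      refine le_of_forall_pos_le_add ?_
      intro ε hε
      have := key (2 * ε / b) (by positivity)
      rw [← hA0'] at this
      calc I ≤ 0 / (2 * (2 * ε / b)) + b * (2 * ε / b) / 2 := this
        _ = ε := by field_simp; ring
        _ ≤ 0 + ε := by linarith
    have : I = 0 := le_antisymm hIle hI0
    rw [this, ← hA0']
    simp
  · set t := Real.sqrt (A / b) with htdef
    have ht : 0 < t := Real.sqrt_pos.2 (div_pos hApos hbpos)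
    have ht2 : t ^ 2 = A / b := Real.sq_sqrt (le_of_lt (div_pos hApos hbpos))
    have hAbt : A = b * t ^ 2 := by rw [ht2]; field_simp
    have hS := key t ht
    have heq : A / (2 * t) + b * t / 2 = b * t := by
      rw [hAbt]; field_simp; ring
    rw [heq] at hS
    nlinarith [hS, ht, hbpos, hI0, hAbt]

set_option maxHeartbeats 1000000 in
/-- Poincaré-type inequality for a flat connection on `S¹` (Lemma 4.3). -/
theorem poincare_flat_connection (K : ℕ) (hK : 0 < K)
    (α : Matrix (Fin K) (Fin K) ℝ) (hα : αᵀ = -α) :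
    ∃ C > 0, ∀ u : ℝ → EuclideanSpace ℝ (Fin K),
      ContDiff ℝ 2 u → Function.Periodic u (2 * Real.pi) →
      (∫ θ in (0:ℝ)..(2 * Real.pi), ‖deriv u θ + matAct α (u θ)‖ ^ 2) ≤
        C * ∫ θ in (0:ℝ)..(2 * Real.pi),
          ‖deriv (deriv u) θ + (2 : ℝ) • matAct α (deriv u θ)
            + matAct α (matAct α (u θ))‖ ^ 2 := by
  classical
  set aL : EuclideanSpace ℝ (Fin K) →L[ℝ] EuclideanSpace ℝ (Fin K) :=
    LinearMap.toContinuousLinearMap (Matrix.toEuclideanLin α) with haLdef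
  have haL : ∀ x, matAct α x = aL x := fun _ => rfl
  set T : ℝ := 2 * Real.pi with hTdef
  have hT : 0 < T := Real.two_pi_pos
  -- skew-symmetry of the action
  have hskew : ∀ x y : EuclideanSpace ℝ (Fin K), ⟪aL x, y⟫ = - ⟪x, aL y⟫ := by
    intro x y
    have hα' : ∀ i j, α j i = - α i j := by
      intro i j
      have := congrFun (congrFun hα i) j
      simpa [Matrix.transpose_apply] using this
    rw [haLdef]
    simp only [LinearMap.coe_toContinuousLinearMap', Matrix.toEuclideanLin_apply,
      PiLp.inner_apply, RCLike.inner_apply, conj_trivial,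
      PiLp.toLp_apply, Matrix.mulVec, dotProduct,
      Finset.sum_mul, Finset.mul_sum, ← Finset.sum_neg_distrib]
    rw [Finset.sum_comm]
    refine Finset.sum_congr rfl fun j _ => Finset.sum_congr rfl fun i _ => ?_
    rw [hα']
    ring
  -- the one-parameter group generated by `aL`
  set R : ℝ → (EuclideanSpace ℝ (Fin K) →L[ℝ] EuclideanSpace ℝ (Fin K)) :=
    fun θ => NormedSpace.exp (θ • aL) with hRdef
  have hRd : ∀ θ, HasDerivAt R (aL * R θ) θ := fun θ => hasDerivAt_exp_smul_const' aL θ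
  have hR0 : R 0 = 1 := by
    show NormedSpace.exp ((0:ℝ) • aL) = 1
    rw [show (0:ℝ) • aL = 0 from zero_smul ℝ aL]
    exact NormedSpace.exp_zero
  have hRapp : ∀ (x : EuclideanSpace ℝ (Fin K)) (θ : ℝ),
      HasDerivAt (fun θ => R θ x) (aL (R θ x)) θ := by
    intro x θ
    have h := (hRd θ).clm_apply (hasDerivAt_const θ x)
    simpa using h
  have hinner : ∀ (x y : EuclideanSpace ℝ (Fin K)) (θ : ℝ), ⟪R θ x, R θ y⟫ = ⟪x, y⟫ := by
    intro x y θ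
    have hF : ∀ s, HasDerivAt (fun s => ⟪R s x, R s y⟫) 0 s := by
      intro s
      have h := (hRapp x s).inner ℝ (hRapp y s)
      simpa [hskew] using h
    have hconst := is_const_of_deriv_eq_zero (f := fun s => ⟪R s x, R s y⟫)
      (fun s => (hF s).differentiableAt) (fun s => (hF s).deriv) θ 0
    simpa [hR0] using hconst
  have hiso : ∀ (x : EuclideanSpace ℝ (Fin K)) (θ : ℝ), ‖R θ x‖ = ‖x‖ := by
    intro x θ
    have h := hinner x x θ
    rw [real_inner_self_eq_norm_mul_norm, real_inner_self_eq_norm_mul_norm] at h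
    nlinarith [norm_nonneg (R θ x), norm_nonneg x]
  have hRcont : Continuous R := Differentiable.continuous (fun θ => (hRd θ).differentiableAt)
  have hcomm : ∀ θ : ℝ, aL * R θ = R θ * aL := by
    intro θ
    have hc : Commute aL (θ • aL) := by
      show aL * (θ • aL) = (θ • aL) * aL
      ext x
      simp [ContinuousLinearMap.mul_apply, _root_.map_smul]
    exact hc.exp_right.eq
  -- the monodromy `Q` and the kernel of `Q - 1`
  set Q : EuclideanSpace ℝ (Fin K) →L[ℝ] EuclideanSpace ℝ (Fin K) := R T with hQdef
  set Kk : Submodule ℝ (EuclideanSpace ℝ (Fin K)) :=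
    LinearMap.ker ((Q - 1 : EuclideanSpace ℝ (Fin K) →L[ℝ] EuclideanSpace ℝ (Fin K)) : EuclideanSpace ℝ (Fin K) →ₗ[ℝ] EuclideanSpace ℝ (Fin K)) with hKkdef
  have hmemK : ∀ c, c ∈ Kk ↔ Q c = c := by
    intro c
    rw [hKkdef, LinearMap.mem_ker, ContinuousLinearMap.coe_coe, ContinuousLinearMap.sub_apply,
      ContinuousLinearMap.one_apply, sub_eq_zero]
  have hperp : ∀ x, Q x - x ∈ Kkᗮ := by
    intro x
    rw [Submodule.mem_orthogonal]
    intro c hc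
    have hQc : Q c = c := (hmemK c).1 hc
    rw [inner_sub_right]
    calc (⟪c, Q x⟫ : ℝ) - ⟪c, x⟫ = ⟪Q c, Q x⟫ - ⟪c, x⟫ := by rw [hQc]
      _ = ⟪c, x⟫ - ⟪c, x⟫ := by rw [show (⟪Q c, Q x⟫ : ℝ) = ⟪c, x⟫ from hinner c x T]
      _ = 0 := sub_self _
  -- quantitative invertibility of `Q - 1` on the orthogonal complement of its kernel
  obtain ⟨c₀, hc₀pos, hc₀⟩ : ∃ c : ℝ, 0 < c ∧ ∀ x ∈ Kkᗮ,
      ‖x‖ ≤ c * ‖(Q - 1 : EuclideanSpace ℝ (Fin K) →L[ℝ] EuclideanSpace ℝ (Fin K)) x‖ := by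
    set S : Kkᗮ →ₗ[ℝ] EuclideanSpace ℝ (Fin K) :=
      ((Q - 1 : EuclideanSpace ℝ (Fin K) →L[ℝ] EuclideanSpace ℝ (Fin K))
        : EuclideanSpace ℝ (Fin K) →ₗ[ℝ] EuclideanSpace ℝ (Fin K)).comp
        (Submodule.subtype Kkᗮ) with hSdef
    have hSx : ∀ x : Kkᗮ, S x
        = (Q - 1 : EuclideanSpace ℝ (Fin K) →L[ℝ] EuclideanSpace ℝ (Fin K)) (x : _) :=
      fun x => rfl
    have hSinj : Function.Injective S := by
      intro x y hxy
      have h0 : S (x - y) = 0 := by rw [map_sub, hxy, sub_self]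
      have hz : ((x - y : Kkᗮ) : EuclideanSpace ℝ (Fin K)) ∈ Kk :=
        LinearMap.mem_ker.mpr h0
      have hz2 : ((x - y : Kkᗮ) : EuclideanSpace ℝ (Fin K)) ∈ Kkᗮ := SetLike.coe_mem _
      have hz0 : ((x - y : Kkᗮ) : EuclideanSpace ℝ (Fin K)) = 0 :=
        Submodule.disjoint_def.mp (Submodule.orthogonal_disjoint Kk) _ hz hz2
      have : (x - y : Kkᗮ) = 0 := Subtype.ext hz0
      exact sub_eq_zero.mp this
    obtain ⟨Knn, hKpos, hanti⟩ := S.injective_iff_antilipschitz.mp hSinj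
    refine ⟨Knn, by exact_mod_cast hKpos, ?_⟩
    intro x hx
    have hdist := hanti.le_mul_dist (⟨x, hx⟩ : Kkᗮ) 0
    rw [map_zero, dist_zero_right, dist_zero_right] at hdist
    exact hdist
  -- the constant
  refine ⟨T ^ 2 * (2 + c₀) ^ 2, by positivity, ?_⟩
  intro u hu hper
  simp only [haL]
  -- regularity bookkeeping
  have hu' : ContDiff ℝ ((1 : WithTop ℕ∞) + 1) u := by
    rw [one_add_one_eq_two]; exact hu
  have hsplit := contDiff_succ_iff_deriv.mp hu'
  have hu1 : Differentiable ℝ u := hsplit.1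
  have hud : ContDiff ℝ 1 (deriv u) := hsplit.2.2
  have hsplit2 := contDiff_one_iff_deriv.mp hud
  have hu2 : Differentiable ℝ (deriv u) := hsplit2.1
  have hcu : Continuous u := hu1.continuous
  have hcu' : Continuous (deriv u) := hu2.continuous
  have hcu'' : Continuous (deriv (deriv u)) := hsplit2.2
  -- periodicity of the derivative
  have hperd : Function.Periodic (deriv u) T := by
    intro θ
    have h2 : (fun s => u (s + T)) = u := funext fun s => hper s
    calc deriv u (θ + T) = deriv (fun s => u (s + T)) θ := (deriv_comp_add_const u T θ).symm
      _ = deriv u θ := by rw [h2]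
  -- the twisted derivatives
  set v : ℝ → EuclideanSpace ℝ (Fin K) := fun θ => deriv u θ + aL (u θ) with hvdef
  set g : ℝ → EuclideanSpace ℝ (Fin K) :=
    fun θ => deriv (deriv u) θ + (2:ℝ) • aL (deriv u θ) + aL (aL (u θ)) with hgdef
  have hvcont : Continuous v := hcu'.add (aL.continuous.comp hcu)
  have hgcont : Continuous g :=
    (hcu''.add ((aL.continuous.comp hcu').const_smul (2:ℝ))).add
      (aL.continuous.comp (aL.continuous.comp hcu))
  have hvper : Function.Periodic v T := by
    intro θ
    simp only [hvdef]
    rw [hper θ, hperd θ]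
  have hvd : ∀ θ, HasDerivAt v (deriv (deriv u) θ + aL (deriv u θ)) θ := by
    intro θ
    exact ((hu2 θ).hasDerivAt).add (aL.hasFDerivAt.comp_hasDerivAt θ (hu1 θ).hasDerivAt)
  -- the conjugated function `w`
  set w : ℝ → EuclideanSpace ℝ (Fin K) := fun θ => R θ (v θ) with hwdef
  have hwcont : Continuous w := hRcont.clm_apply hvcont
  have hwd : ∀ θ, HasDerivAt w (R θ (g θ)) θ := by
    intro θ
    have h := (hRd θ).clm_apply (hvd θ)
    have he : (aL * R θ) (v θ) + R θ (deriv (deriv u) θ + aL (deriv u θ)) = R θ (g θ) := by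
      rw [hcomm θ]
      simp only [ContinuousLinearMap.mul_apply, ← map_add]
      congr 1
      simp only [hvdef, hgdef, map_add, two_smul]
      abel
    exact he ▸ h
  have hUd : ∀ θ, HasDerivAt (fun θ => R θ (u θ)) (w θ) θ := by
    intro θ
    have h := (hRd θ).clm_apply (hu1 θ).hasDerivAt
    have he : (aL * R θ) (u θ) + R θ (deriv u θ) = w θ := by
      rw [hcomm θ]
      simp only [ContinuousLinearMap.mul_apply, ← map_add]
      congr 1
      simp only [hvdef]
      abel
    exact he ▸ h
  -- the basic integral quantity
  set I₁ : ℝ := ∫ θ in (0:ℝ)..T, ‖g θ‖ with hI₁def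
  have hI₁0 : 0 ≤ I₁ := intervalIntegral.integral_nonneg hT.le fun _ _ => norm_nonneg _
  have hw'cont : Continuous fun s => R s (g s) := hRcont.clm_apply hgcont
  have hFTC : ∀ θ : ℝ, ∫ s in (0:ℝ)..θ, R s (g s) = w θ - w 0 := fun θ =>
    intervalIntegral.integral_eq_sub_of_hasDerivAt (fun s _ => hwd s)
      (hw'cont.intervalIntegrable 0 θ)
  have hnormint : ∀ θ ∈ Set.Icc (0:ℝ) T, ‖w θ - w 0‖ ≤ I₁ := by
    intro θ hθ
    rw [← hFTC θ]
    calc ‖∫ s in (0:ℝ)..θ, R s (g s)‖ ≤ ∫ s in (0:ℝ)..θ, ‖R s (g s)‖ :=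
        intervalIntegral.norm_integral_le_integral_norm hθ.1
      _ = ∫ s in (0:ℝ)..θ, ‖g s‖ :=
        intervalIntegral.integral_congr fun s _ => hiso (g s) s
      _ ≤ I₁ := by
        refine intervalIntegral.integral_mono_interval le_rfl hθ.1 hθ.2
          (Filter.Eventually.of_forall fun s => norm_nonneg _)
          (hgcont.norm.intervalIntegrable _ _)
  have hw0 : w 0 = v 0 := by
    simp only [hwdef, hR0, ContinuousLinearMap.one_apply]
  have hwT : w T = Q (w 0) := by
    have hvT : v T = v 0 := by
      have := hvper 0
      simpa using this
    simp only [hwdef, hQdef, hvT, hR0, ContinuousLinearMap.one_apply]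
  have b1 : ‖Q (w 0) - w 0‖ ≤ I₁ := by
    have := hnormint T ⟨hT.le, le_rfl⟩
    rwa [hwT] at this
  -- the integral of `w`
  have hUFTC : ∫ θ in (0:ℝ)..T, w θ = Q (u 0) - u 0 := by
    have h := intervalIntegral.integral_eq_sub_of_hasDerivAt
      (f := fun θ => R θ (u θ)) (fun s _ => hUd s) (hwcont.intervalIntegrable 0 T)
    rw [h]
    show R T (u T) - R 0 (u 0) = Q (u 0) - u 0
    have huT : u T = u 0 := by
      have := hper 0
      simpa using this
    rw [huT, hR0, hQdef]
    simp
  -- estimate on the projection of `w 0` to `Kk`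
  set P := Kk.orthogonalProjectionOnto with hPdef
  have hPnorm : ∀ z, ‖(P z : EuclideanSpace ℝ (Fin K))‖ ≤ ‖z‖ := fun z => by
    have h := Kk.orthogonalProjectionOnto.le_opNorm z
    have h2 := Submodule.orthogonalProjectionOnto_norm_le Kk
    calc ‖(P z : EuclideanSpace ℝ (Fin K))‖ = ‖P z‖ := rfl
      _ ≤ ‖Kk.orthogonalProjectionOnto‖ * ‖z‖ := h
      _ ≤ 1 * ‖z‖ := mul_le_mul_of_nonneg_right h2 (norm_nonneg z)
      _ = ‖z‖ := one_mul _
  have hsub : ∫ θ in (0:ℝ)..T, (w θ - w 0) = (Q (u 0) - u 0) - T • w 0 := by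
    rw [intervalIntegral.integral_sub (hwcont.intervalIntegrable 0 T)
      (intervalIntegrable_const), hUFTC, intervalIntegral.integral_const]
    simp
  have hTw0 : T • w 0 = (Q (u 0) - u 0) - ∫ θ in (0:ℝ)..T, (w θ - w 0) := by
    rw [hsub]; abel
  have h1 : P (T • w 0) = - P (∫ θ in (0:ℝ)..T, (w θ - w 0)) := by
    rw [hTw0, map_sub, Submodule.orthogonalProjectionOnto_apply_of_mem_orthogonal
      (hperp (u 0)), zero_sub]
  have h2 : ‖∫ θ in (0:ℝ)..T, (w θ - w 0)‖ ≤ T * I₁ := by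
    calc ‖∫ θ in (0:ℝ)..T, (w θ - w 0)‖ ≤ ∫ θ in (0:ℝ)..T, ‖w θ - w 0‖ :=
        intervalIntegral.norm_integral_le_integral_norm hT.le
      _ ≤ ∫ θ in (0:ℝ)..T, I₁ := intervalIntegral.integral_mono_on hT.le
          (((hwcont.sub continuous_const).norm).intervalIntegrable _ _)
          intervalIntegrable_const hnormint
      _ = T * I₁ := by rw [intervalIntegral.integral_const]; simp [smul_eq_mul]
  have hPw0 : ‖(P (w 0) : EuclideanSpace ℝ (Fin K))‖ ≤ I₁ := by
    have h3 : ‖(P (T • w 0) : EuclideanSpace ℝ (Fin K))‖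
        = T * ‖(P (w 0) : EuclideanSpace ℝ (Fin K))‖ := by
      rw [_root_.map_smul]
      rw [show ((T • P (w 0) : Kk) : EuclideanSpace ℝ (Fin K))
        = T • (P (w 0) : EuclideanSpace ℝ (Fin K)) from rfl]
      rw [norm_smul]
      simp [abs_of_pos hT]
    have h4 : ‖(P (T • w 0) : EuclideanSpace ℝ (Fin K))‖ ≤ T * I₁ := by
      rw [h1]
      rw [show ((-(P (∫ θ in (0:ℝ)..T, (w θ - w 0))) : Kk) : EuclideanSpace ℝ (Fin K))
        = -((P (∫ θ in (0:ℝ)..T, (w θ - w 0)) : Kk) : EuclideanSpace ℝ (Fin K)) from rfl]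
      rw [norm_neg]
      exact (hPnorm _).trans h2
    rw [h3] at h4
    exact le_of_mul_le_mul_left h4 hT
  -- full estimate on `w 0`
  have hw0norm : ‖w 0‖ ≤ (1 + c₀) * I₁ := by
    set p : EuclideanSpace ℝ (Fin K) := (P (w 0) : EuclideanSpace ℝ (Fin K)) with hpdef
    have hmemp : p ∈ Kk := SetLike.coe_mem _
    have hperp2 : w 0 - p ∈ Kkᗮ := Submodule.sub_starProjection_mem_orthogonal (w 0)
    have h5 : (Q - 1 : EuclideanSpace ℝ (Fin K) →L[ℝ] EuclideanSpace ℝ (Fin K)) (w 0 - p)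
        = Q (w 0) - w 0 := by
      have hp : (Q - 1 : EuclideanSpace ℝ (Fin K) →L[ℝ] EuclideanSpace ℝ (Fin K)) p = 0 := by
        rw [← ContinuousLinearMap.coe_coe, ← LinearMap.mem_ker]
        exact hmemp
      rw [map_sub, hp, sub_zero, ContinuousLinearMap.sub_apply,
        ContinuousLinearMap.one_apply]
    have h6 : ‖w 0 - p‖ ≤ c₀ * I₁ := by
      have h7 := hc₀ _ hperp2
      rw [h5] at h7
      calc ‖w 0 - p‖ ≤ c₀ * ‖Q (w 0) - w 0‖ := h7
        _ ≤ c₀ * I₁ := mul_le_mul_of_nonneg_left b1 hc₀pos.le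
    calc ‖w 0‖ = ‖p + (w 0 - p)‖ := by rw [add_sub_cancel]
      _ ≤ ‖p‖ + ‖w 0 - p‖ := norm_add_le _ _
      _ ≤ I₁ + c₀ * I₁ := add_le_add hPw0 h6
      _ = (1 + c₀) * I₁ := by ring
  have b7 : ∀ θ ∈ Set.Icc (0:ℝ) T, ‖w θ‖ ≤ (2 + c₀) * I₁ := by
    intro θ hθ
    have hrw : w θ = w 0 + (w θ - w 0) := by abel
    calc ‖w θ‖ = ‖w 0 + (w θ - w 0)‖ := by rw [← hrw]
      _ ≤ ‖w 0‖ + ‖w θ - w 0‖ := norm_add_le _ _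
      _ ≤ (1 + c₀) * I₁ + I₁ := add_le_add hw0norm (hnormint θ hθ)
      _ = (2 + c₀) * I₁ := by ring
  -- final assembly
  have hLHS : ∫ θ in (0:ℝ)..T, ‖v θ‖ ^ 2 ≤ T * ((2 + c₀) * I₁) ^ 2 := by
    calc ∫ θ in (0:ℝ)..T, ‖v θ‖ ^ 2 = ∫ θ in (0:ℝ)..T, ‖w θ‖ ^ 2 :=
        intervalIntegral.integral_congr fun θ _ => by
          simp only [hwdef]
          rw [hiso]
      _ ≤ ∫ θ in (0:ℝ)..T, ((2 + c₀) * I₁) ^ 2 := by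
        refine intervalIntegral.integral_mono_on hT.le
          ((hwcont.norm.pow 2).intervalIntegrable _ _) intervalIntegrable_const
          fun θ hθ => ?_
        have hb := b7 θ hθ
        have h0 : (0:ℝ) ≤ ‖w θ‖ := norm_nonneg _
        nlinarith [hb, h0]
      _ = T * ((2 + c₀) * I₁) ^ 2 := by
        rw [intervalIntegral.integral_const]; simp [smul_eq_mul]
  have hCS : I₁ ^ 2 ≤ T * ∫ θ in (0:ℝ)..T, ‖g θ‖ ^ 2 :=
    poincare_cs_aux hT.le hgcont.norm (fun _ => norm_nonneg _)
  have hRHS0 : 0 ≤ ∫ θ in (0:ℝ)..T, ‖g θ‖ ^ 2 :=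
    intervalIntegral.integral_nonneg hT.le fun _ _ => sq_nonneg _
  calc ∫ θ in (0:ℝ)..T, ‖v θ‖ ^ 2 ≤ T * ((2 + c₀) * I₁) ^ 2 := hLHS
    _ = T * (2 + c₀) ^ 2 * I₁ ^ 2 := by ring
    _ ≤ T * (2 + c₀) ^ 2 * (T * ∫ θ in (0:ℝ)..T, ‖g θ‖ ^ 2) := by
      refine mul_le_mul_of_nonneg_left hCS ?_
      positivity
    _ = T ^ 2 * (2 + c₀) ^ 2 * ∫ θ in (0:ℝ)..T, ‖g θ‖ ^ 2 := by ring
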